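/- Let n₁, n₂, l₁, l₂ > 0 with n₁ ≠ n₂, A = (n₁/n₂ + n₂/n₁)/2 + 1, B = (n₁/n₂ + n₂/n₁)/2 − 1, a = n₁l₁ + n₂l₂, b = n₁l₁ − n₂l₂, f(ν) = A cos(aν) − B cos(bν). Assume b ≠ 0 and a/b is irrational. Then there exists δ > 0 such that for every M > 0 there exists ν > M with f(μ) > 2 for all μ ∈ [ν − δ, ν + δ]. (One may take δ = (A + B − 2)/(2(Aa + B|b|)), since |f′(μ)| ≤ Aa + B|b| for all μ.) Hence the lengths of the spectral gaps of the two-layer periodic optical medium do not vanish as the frequency tends to infinity. -/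

import Mathlib

open Real

lemma myAbsCos (x y : ℝ) : |Real.cos x - Real.cos y| ≤ |x - y| := by
  rw [Real.cos_sub_cos, abs_mul, abs_mul]
  have h1 : |(-2 : ℝ)| = 2 := by norm_num
  have h2 : |Real.sin ((x + y) / 2)| ≤ 1 := abs_le.mpr ⟨Real.neg_one_le_sin _, Real.sin_le_one _⟩
  have h3 : |Real.sin ((x - y) / 2)| ≤ |(x - y) / 2| := Real.abs_sin_le_abs
  calc |(-2:ℝ)| * |Real.sin ((x + y) / 2)| * |Real.sin ((x - y) / 2)|
      ≤ 2 * 1 * |(x - y)/2| := by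
        apply mul_le_mul _ h3 (abs_nonneg _) (by norm_num)
        rw [h1]; nlinarith [abs_nonneg (Real.sin ((x+y)/2))]
    _ = |x - y| := by rw [abs_div]; rw [abs_of_pos (by norm_num : (0:ℝ)<2)]; ring

lemma myKey {θ : ℝ} (hθ : Irrational θ) (x : ℝ) {ε : ℝ} (hε : 0 < ε) (Q : ℕ) :
    ∃ m k : ℤ, (Q : ℝ) ≤ |(m : ℝ)| ∧ |m * θ + x - k| < ε := by
  obtain ⟨n, hn⟩ := exists_nat_gt (1 / ε)
  have n_pos : 0 < n := by
    by_contra h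
    push_neg at h
    interval_cases n
    simp at hn
    nlinarith [one_div_pos.mpr hε]
  obtain ⟨j₀, k₀, hk₀pos, hk₀le, hβ⟩ := Real.exists_int_int_abs_mul_sub_le θ n_pos
  set β : ℝ := (k₀ : ℝ) * θ - (j₀ : ℝ) with hβdef
  have hβne : β ≠ 0 := by
    intro h
    apply hθ
    refine ⟨(j₀ : ℚ) / (k₀ : ℚ), ?_⟩
    have hk₀ : (k₀ : ℝ) ≠ 0 := Int.cast_ne_zero.mpr hk₀pos.ne'
    have h' : (k₀ : ℝ) * θ = j₀ := by
      have := sub_eq_zero.mp h; linarith [this]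
    push_cast
    field_simp
    linarith
  have hβlt : |β| < ε := by
    have h1 : (0:ℝ) < (n:ℝ) + 1 := by positivity
    have h2 : 1 / ((n:ℝ) + 1) < ε := by
      rw [div_lt_iff₀ h1]
      rw [div_lt_iff₀ hε] at hn
      nlinarith
    linarith
  obtain ⟨k', hk'⟩ : ∃ k' : ℤ, ((Q : ℝ) + 1) ≤ ((k' : ℝ) - x) / β := by
    rcases lt_or_gt_of_ne hβne with hneg | hpos
    · refine ⟨⌊x + ((Q:ℝ) + 1) * β⌋, ?_⟩
      rw [le_div_iff_of_neg hneg]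
      have := Int.floor_le (x + ((Q:ℝ) + 1) * β)
      linarith
    · refine ⟨⌈x + ((Q:ℝ) + 1) * β⌉, ?_⟩
      rw [le_div_iff₀ hpos]
      have := Int.le_ceil (x + ((Q:ℝ) + 1) * β)
      linarith
  set y : ℝ := ((k' : ℝ) - x) / β with hy
  set q : ℤ := ⌈y⌉ with hq
  have hy_le : y ≤ (q : ℝ) := Int.le_ceil y
  have hq_lt : (q : ℝ) < y + 1 := Int.ceil_lt_add_one y
  have hqQ : (Q : ℝ) + 1 ≤ (q : ℝ) := le_trans hk' hy_le
  have hq0 : (0:ℝ) < (q:ℝ) := lt_of_lt_of_le (by positivity) hqQ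
  refine ⟨q * k₀, k' + q * j₀, ?_, ?_⟩
  · have h1 : (1 : ℝ) ≤ |(k₀ : ℝ)| := by
      rw [← Int.cast_abs]
      exact_mod_cast Int.one_le_abs (by omega)
    push_cast
    rw [abs_mul, abs_of_pos hq0]
    nlinarith
  · have hyβ : y * β = (k' : ℝ) - x := div_mul_cancel₀ _ hβne
    have heq : ((q * k₀ : ℤ) : ℝ) * θ + x - ((k' + q * j₀ : ℤ) : ℝ)
        = ((q : ℝ) - y) * β := by
      push_cast
      linear_combination ((q:ℝ)) * hβdef + hyβ
    rw [heq, abs_mul, abs_of_nonneg (by linarith : (0:ℝ) ≤ (q:ℝ) - y)]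
    nlinarith [abs_nonneg β]

theorem stmt_2 (n₁ n₂ l₁ l₂ : ℝ) (hn₁ : 0 < n₁) (hn₂ : 0 < n₂)
    (hl₁ : 0 < l₁) (hl₂ : 0 < l₂) (hne : n₁ ≠ n₂)
    (A B a b : ℝ)
    (hA : A = (n₁ / n₂ + n₂ / n₁) / 2 + 1)
    (hB : B = (n₁ / n₂ + n₂ / n₁) / 2 - 1)
    (ha : a = n₁ * l₁ + n₂ * l₂)
    (hb : b = n₁ * l₁ - n₂ * l₂)
    (hb0 : b ≠ 0) (hirr : Irrational (a / b))
    (f : ℝ → ℝ) (hf : ∀ ν, f ν = A * Real.cos (a * ν) - B * Real.cos (b * ν)) :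
    ∃ δ > 0, ∀ M > 0, ∃ ν > M, ∀ μ ∈ Set.Icc (ν - δ) (ν + δ), f μ > 2 := by
  obtain ⟨c, hc⟩ : ∃ c : ℝ, c = n₁ / n₂ + n₂ / n₁ := ⟨_, rfl⟩
  rw [← hc] at hA hB
  have hc2 : 2 < c := by
    have hd : n₁ - n₂ ≠ 0 := sub_ne_zero.mpr hne
    have h0 : 0 < |n₁ - n₂| := abs_pos.mpr hd
    rw [hc]; rw [div_add_div _ _ hn₂.ne' hn₁.ne', lt_div_iff₀ (mul_pos hn₂ hn₁)]
    nlinarith [mul_pos h0 h0, abs_mul_abs_self (n₁ - n₂)]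
  have hApos : 0 < A := by rw [hA]; linarith
  have hBpos : 0 < B := by rw [hB]; linarith
  have hAB : A + B = c := by rw [hA, hB]; ring
  have hbabs : 0 < |b| := abs_pos.mpr hb0
  obtain ⟨L, hL⟩ : ∃ L : ℝ, L = A * |a| + B * |b| := ⟨_, rfl⟩
  have hLpos : 0 < L := hL ▸ add_pos_of_nonneg_of_pos (mul_nonneg hApos.le (abs_nonneg a)) (mul_pos hBpos hbabs)
  have hc2' : 0 < c - 2 := by linarith
  obtain ⟨δ, hδdef⟩ : ∃ δ : ℝ, δ = (c - 2) / (4 * L) := ⟨_, rfl⟩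
  have hδpos : 0 < δ := hδdef ▸ div_pos hc2' (by positivity)
  obtain ⟨ε₀, hε₀def⟩ : ∃ e : ℝ, e = (c - 2) / (8 * π * A) := ⟨_, rfl⟩
  have hε₀pos : 0 < ε₀ := hε₀def ▸ div_pos hc2' (by positivity)
  refine ⟨δ, hδpos, ?_⟩
  intro M hM
  obtain ⟨Q, hQ⟩ := exists_nat_gt (M * |b| / π)
  obtain ⟨m, k, hmQ, hmk⟩ := myKey hirr ((a / b) / 2) hε₀pos (Q + 1)
  have hmQ' : (Q : ℝ) + 1 ≤ |(m : ℝ)| := by push_cast at hmQ; linarith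
  obtain ⟨ν₀, hν₀def⟩ : ∃ v : ℝ, v = (2 * (m : ℝ) + 1) * π / b := ⟨_, rfl⟩
  have hbν₀ : b * ν₀ = (m : ℝ) * (2 * π) + π := by
    rw [hν₀def]; field_simp
  have haν₀ : a * ν₀ = 2 * π * ((m : ℝ) * (a / b) + (a / b) / 2) := by
    rw [hν₀def]; field_simp
  have hcosb : Real.cos (b * ν₀) = -1 := by
    rw [hbν₀]; exact Real.cos_int_mul_two_pi_add_pi m
  have hcosa : 1 - 2 * π * ε₀ ≤ Real.cos (a * ν₀) := by
    have h1 : |Real.cos (a * ν₀) - Real.cos ((k : ℝ) * (2 * π))| ≤ |a * ν₀ - (k : ℝ) * (2 * π)| :=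
      myAbsCos _ _
    have h2 : Real.cos ((k : ℝ) * (2 * π)) = 1 := Real.cos_int_mul_two_pi k
    have h3 : a * ν₀ - (k : ℝ) * (2 * π)
        = 2 * π * ((m : ℝ) * (a / b) + (a / b) / 2 - (k : ℝ)) := by
      rw [haν₀]; ring
    have h4 : |a * ν₀ - (k : ℝ) * (2 * π)| ≤ 2 * π * ε₀ := by
      rw [h3, abs_mul, abs_of_pos (by positivity : (0:ℝ) < 2 * π)]
      have := hmk.le
      nlinarith [pi_pos]
    rw [h2] at h1
    have := abs_le.mp (le_trans h1 h4)
    linarith [this.1]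
  have hfν₀ : c - (c - 2) / 4 ≤ f ν₀ := by
    rw [hf, hcosb]
    have h2 : 2 * π * ε₀ * A = (c - 2) / 4 := by
      rw [hε₀def]; field_simp; ring
    have h3 := mul_le_mul_of_nonneg_left hcosa hApos.le
    linarith [h3, h2, hAB]
  have hν₀abs : M < |ν₀| := by
    have habs : |ν₀| = |2 * (m : ℝ) + 1| * π / |b| := by
      rw [hν₀def, abs_div, abs_mul, abs_of_pos pi_pos]
    have t1 : |2 * (m : ℝ)| ≤ |2 * (m : ℝ) + 1| + 1 := by
      have := abs_add_le (2 * (m : ℝ) + 1) (-1)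
      simpa using this
    have t2 : |2 * (m : ℝ)| = 2 * |(m : ℝ)| := by
      rw [abs_mul, abs_of_pos (by norm_num : (0:ℝ) < 2)]
    have t3 : 2 * (Q : ℝ) + 1 ≤ |2 * (m : ℝ) + 1| := by
      rw [t2] at t1; linarith
    rw [habs, lt_div_iff₀ hbabs]
    rw [div_lt_iff₀ pi_pos] at hQ
    have t4 := mul_le_mul_of_nonneg_right t3 pi_pos.le
    linarith [pi_pos, t4, hQ, mul_nonneg (Nat.cast_nonneg Q : (0:ℝ) ≤ (Q:ℝ)) pi_pos.le]
  obtain ⟨ν, hνdef⟩ : ∃ v : ℝ, v = |ν₀| := ⟨_, rfl⟩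
  have hfeven : f ν = f ν₀ := by
    rcases abs_choice ν₀ with h | h
    · rw [hνdef, h]
    · rw [hνdef, h, hf, hf]
      rw [mul_neg, mul_neg, Real.cos_neg, Real.cos_neg]
  refine ⟨ν, hνdef ▸ hν₀abs, ?_⟩
  intro μ hμ
  have hμν : |μ - ν| ≤ δ := by
    rw [abs_le]; exact ⟨by linarith [hμ.1], by linarith [hμ.2]⟩
  have hcos1 : |Real.cos (a * μ) - Real.cos (a * ν)| ≤ |a| * δ := by
    refine (myAbsCos _ _).trans ?_
    rw [show a * μ - a * ν = a * (μ - ν) by ring, abs_mul]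
    exact mul_le_mul_of_nonneg_left hμν (abs_nonneg a)
  have hcos2 : |Real.cos (b * μ) - Real.cos (b * ν)| ≤ |b| * δ := by
    refine (myAbsCos _ _).trans ?_
    rw [show b * μ - b * ν = b * (μ - ν) by ring, abs_mul]
    exact mul_le_mul_of_nonneg_left hμν (abs_nonneg b)
  have hLδ : L * δ = (c - 2) / 4 := by
    have hL0 : L ≠ 0 := hLpos.ne'
    rw [hδdef]; field_simp
  have e1 := abs_le.mp hcos1
  have e2 := abs_le.mp hcos2
  have hfν : c - (c - 2) / 4 ≤ A * Real.cos (a * ν) - B * Real.cos (b * ν) := by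
    rw [← hf, hfeven]; exact hfν₀
  have p1 := mul_le_mul_of_nonneg_left e1.1 hApos.le
  have p2 := mul_le_mul_of_nonneg_left e2.2 hBpos.le
  have hLδ' : (A * |a| + B * |b|) * δ = (c - 2) / 4 := by rw [← hL]; exact hLδ
  rw [hf]
  linarith [p1, p2, hfν, hLδ', hc2]
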